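/- Let Q ≥ 0 be continuous on ℝⁿ with μ = (1/c_n) Q(z)e^{nw(z)}dz a finite measure of total mass α < 1, where w(x) = (1/c_n) ∫ log(|z|/|x−z|) Q(z)e^{nw(z)} dz + C. Then e^{nw} is an A₁ weight: M(e^{nw})(x) ≤ C' e^{nw(x)} for all x ∈ ℝⁿ, with C' depending only on n and α. -/

import Mathlib

open Metric MeasureTheory
open scoped NNReal ENNReal

lemma jensen_exp {X : Type*} [MeasurableSpace X] (P : Measure X) [IsProbabilityMeasure P]
    {u : X → ℝ} (hu : Integrable u P) :
    ENNReal.ofReal (Real.exp (∫ z, u z ∂P)) ≤ ∫⁻ z, ENNReal.ofReal (Real.exp (u z)) ∂P := by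
  set m := ∫ z, u z ∂P with hm
  by_cases hi : Integrable (fun z => Real.exp (u z)) P
  · rw [← ofReal_integral_eq_lintegral_ofReal hi (Filter.Eventually.of_forall fun z => (Real.exp_pos _).le)]
    apply ENNReal.ofReal_le_ofReal
    have key : ∀ z, Real.exp m * u z + (Real.exp m - Real.exp m * m) ≤ Real.exp (u z) := by
      intro z
      have h := Real.add_one_le_exp (u z - m)
      have h2 : Real.exp m * ((u z - m) + 1) ≤ Real.exp m * Real.exp (u z - m) :=
        mul_le_mul_of_nonneg_left h (Real.exp_pos _).le
      have h3 : Real.exp m * Real.exp (u z - m) = Real.exp (u z) := by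
        rw [← Real.exp_add]; ring_nf
      nlinarith
    have hint : Integrable (fun z => Real.exp m * u z + (Real.exp m - Real.exp m * m)) P :=
      (hu.const_mul _).add (integrable_const _)
    have h1 := integral_mono hint hi key
    rw [integral_add (hu.const_mul _) (integrable_const _), MeasureTheory.integral_const_mul,
      integral_const, probReal_univ] at h1
    simp only [ENNReal.toReal_one, one_smul, ← hm] at h1
    linarith
  · have htop : ∫⁻ z, ENNReal.ofReal (Real.exp (u z)) ∂P = ⊤ := by
      by_contra h
      exact hi ((lintegral_ofReal_ne_top_iff_integrable
        (Real.continuous_exp.comp_aestronglyMeasurable hu.aestronglyMeasurable)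
        (Filter.Eventually.of_forall fun z => (Real.exp_pos _).le)).mp h)
    simp [htop]


lemma ball_singular (n : ℕ) (hn : 1 ≤ n) {β : ℝ} (hβ0 : 0 < β) (hβn : β < n) :
    ∀ (z : EuclideanSpace ℝ (Fin n)) (r : ℝ), 0 < r →
      ∫⁻ y in ball z r, ENNReal.ofReal ((r / ‖y - z‖) ^ β) ≤
        ENNReal.ofReal ((2:ℝ)^β * (1 - (2:ℝ)^β / 2^n)⁻¹) * volume (ball z r) := by
  intro z r hr
  haveI : Nonempty (Fin n) := ⟨⟨0, hn⟩⟩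
  haveI : Nontrivial (EuclideanSpace ℝ (Fin n)) := by
    have : Nontrivial (Fin n → ℝ) := inferInstance
    exact (EuclideanSpace.equiv (Fin n) ℝ).toEquiv.nontrivial
  set q : ℝ := (2:ℝ)^β / 2^n with hq
  have hq0 : 0 ≤ q := by positivity
  have hq1 : q < 1 := by
    rw [hq, div_lt_one (by positivity)]
    calc (2:ℝ)^β < 2^(n:ℝ) := by
          exact (Real.rpow_lt_rpow_left_iff one_lt_two).mpr hβn
      _ = 2^n := by rw [Real.rpow_natCast]
  set A : ℕ → Set (EuclideanSpace ℝ (Fin n)) := fun k =>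
    closedBall z (r / 2^k) \ closedBall z (r / 2^(k+1)) with hA
  have cover : ball z r ⊆ (⋃ k, A k) ∪ {z} := by
    intro y hy
    rcases eq_or_ne y z with h | h
    · exact Or.inr (by simp [h])
    · left
      have hd : 0 < ‖y - z‖ := by
        rw [norm_pos_iff]; exact sub_ne_zero.mpr h
      have hdr : ‖y - z‖ < r := by rwa [mem_ball, dist_eq_norm] at hy
      have hx1 : 1 ≤ r / ‖y - z‖ := by
        rw [le_div_iff₀ hd]; linarith
      obtain ⟨k, hk1, hk2⟩ := exists_nat_pow_near hx1 (one_lt_two (α := ℝ))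
      refine Set.mem_iUnion.mpr ⟨k, ?_, ?_⟩
      · rw [mem_closedBall, dist_eq_norm, le_div_iff₀ (by positivity)]
        rw [le_div_iff₀ hd] at hk1
        linarith
      · rw [mem_closedBall, dist_eq_norm, not_le, div_lt_iff₀ (by positivity)]
        rw [div_lt_iff₀ hd] at hk2
        linarith
  have hzero : ∫⁻ y in {z}, ENNReal.ofReal ((r / ‖y - z‖) ^ β) = 0 :=
    setLIntegral_measure_zero _ _ (measure_singleton z)
  have hVr : volume (ball z r) = ENNReal.ofReal (r ^ n) * volume (ball (0:EuclideanSpace ℝ (Fin n)) 1) := by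
    rw [Measure.addHaar_ball volume z hr.le, finrank_euclideanSpace_fin]
  have hAk : ∀ k : ℕ, ∫⁻ y in A k, ENNReal.ofReal ((r / ‖y - z‖) ^ β) ≤
      ENNReal.ofReal ((2:ℝ)^β * q^k) * volume (ball z r) := by
    intro k
    have hbound : ∀ y ∈ A k, ENNReal.ofReal ((r / ‖y - z‖) ^ β) ≤
        ENNReal.ofReal (((2:ℝ)^(k+1)) ^ β) := by
      intro y hy
      apply ENNReal.ofReal_le_ofReal
      apply Real.rpow_le_rpow (by positivity) _ hβ0.le
      have h2 : r / 2^(k+1) < ‖y - z‖ := by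
        have := hy.2
        rw [mem_closedBall, dist_eq_norm, not_le] at this
        exact this
      have hd : 0 < ‖y - z‖ := lt_trans (by positivity) h2
      rw [div_le_iff₀ hd]
      have : r / 2^(k+1) * 2^(k+1) ≤ ‖y - z‖ * 2^(k+1) := by
        apply mul_le_mul_of_nonneg_right h2.le (by positivity)
      rw [div_mul_cancel₀ _ (by positivity : ((2:ℝ)^(k+1)) ≠ 0)] at this
      linarith
    calc ∫⁻ y in A k, ENNReal.ofReal ((r / ‖y - z‖) ^ β)
        ≤ ∫⁻ _ in A k, ENNReal.ofReal (((2:ℝ)^(k+1)) ^ β) :=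
          setLIntegral_mono measurable_const hbound
      _ = ENNReal.ofReal (((2:ℝ)^(k+1)) ^ β) * volume (A k) := setLIntegral_const _ _
      _ ≤ ENNReal.ofReal (((2:ℝ)^(k+1)) ^ β) * (ENNReal.ofReal ((r / 2^k) ^ n) *
            volume (ball (0:EuclideanSpace ℝ (Fin n)) 1)) := by
          gcongr
          have hcb : volume (closedBall z (r / 2^k)) =
              ENNReal.ofReal ((r / 2^k) ^ n) * volume (ball (0:EuclideanSpace ℝ (Fin n)) 1) := by
            rw [Measure.addHaar_closedBall volume z (by positivity : (0:ℝ) ≤ r / 2^k),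
              finrank_euclideanSpace_fin]
          rw [← hcb]
          exact measure_mono Set.diff_subset
      _ = ENNReal.ofReal ((2:ℝ)^β * q^k) * volume (ball z r) := by
          rw [hVr, ← mul_assoc, ← mul_assoc, ← ENNReal.ofReal_mul (by positivity),
            ← ENNReal.ofReal_mul (by positivity)]
          congr 2
          have e1 : (((2:ℝ)^(k+1):ℝ)) ^ β = ((2:ℝ)^β)^(k+1) := by
            rw [← Real.rpow_natCast ((2:ℝ)^β) (k+1), ← Real.rpow_natCast (2:ℝ) (k+1),
              ← Real.rpow_mul (by norm_num), ← Real.rpow_mul (by norm_num), mul_comm]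
          rw [e1, hq, div_pow, div_pow]
          have h2n : ((2:ℝ)^n) ≠ 0 := by positivity
          have h2k : ((2:ℝ)^k) ≠ 0 := by positivity
          field_simp
          ring
  calc ∫⁻ y in ball z r, ENNReal.ofReal ((r / ‖y - z‖) ^ β)
      ≤ ∫⁻ y in (⋃ k, A k) ∪ {z}, ENNReal.ofReal ((r / ‖y - z‖) ^ β) :=
        lintegral_mono_set cover
    _ ≤ (∫⁻ y in ⋃ k, A k, ENNReal.ofReal ((r / ‖y - z‖) ^ β)) +
        ∫⁻ y in {z}, ENNReal.ofReal ((r / ‖y - z‖) ^ β) := lintegral_union_le _ _ _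
    _ = ∫⁻ y in ⋃ k, A k, ENNReal.ofReal ((r / ‖y - z‖) ^ β) := by rw [hzero, add_zero]
    _ ≤ ∑' k, ∫⁻ y in A k, ENNReal.ofReal ((r / ‖y - z‖) ^ β) := lintegral_iUnion_le _ _
    _ ≤ ∑' k, ENNReal.ofReal ((2:ℝ)^β * q^k) * volume (ball z r) :=
        ENNReal.tsum_le_tsum hAk
    _ = (∑' k, ENNReal.ofReal ((2:ℝ)^β * q^k)) * volume (ball z r) := ENNReal.tsum_mul_right
    _ = ENNReal.ofReal ((2:ℝ)^β * (1 - q)⁻¹) * volume (ball z r) := by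
        congr 1
        rw [← ENNReal.ofReal_tsum_of_nonneg (fun k => by positivity)
          ((summable_geometric_of_lt_one hq0 hq1).mul_left _), tsum_mul_left,
          tsum_geometric_of_lt_one hq0 hq1]



lemma ball_kernel (n : ℕ) (hn : 1 ≤ n) {β : ℝ} (hβ0 : 0 < β) (hβn : β < n) :
    ∀ (x z : EuclideanSpace ℝ (Fin n)) (r : ℝ), 0 < r →
      ∫⁻ y in ball x r, ENNReal.ofReal (Real.exp (β * Real.log (‖x - z‖ / ‖y - z‖))) ≤
        ENNReal.ofReal ((2:ℝ)^β + (2:ℝ)^β * ((2:ℝ)^β * (1 - (2:ℝ)^β / 2^n)⁻¹)) *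
          volume (ball x r) := by
  intro x z r hr
  haveI : Nonempty (Fin n) := ⟨⟨0, hn⟩⟩
  haveI : Nontrivial (EuclideanSpace ℝ (Fin n)) := by
    have : Nontrivial (Fin n → ℝ) := inferInstance
    exact (EuclideanSpace.equiv (Fin n) ℝ).toEquiv.nontrivial
  set S : ℝ := (2:ℝ)^β * (1 - (2:ℝ)^β / 2^n)⁻¹ with hS
  have hq1 : (2:ℝ)^β / 2^n < 1 := by
    rw [div_lt_one (by positivity)]
    calc (2:ℝ)^β < 2^(n:ℝ) := (Real.rpow_lt_rpow_left_iff one_lt_two).mpr hβn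
      _ = 2^n := by rw [Real.rpow_natCast]
  have hS0 : 0 ≤ S := by
    apply mul_nonneg (by positivity)
    rw [inv_nonneg]; linarith
  have h2b : (1:ℝ) ≤ (2:ℝ)^β := by
    calc (1:ℝ) = (2:ℝ)^(0:ℝ) := by rw [Real.rpow_zero]
      _ ≤ (2:ℝ)^β := Real.rpow_le_rpow_of_exponent_le one_le_two hβ0.le
  -- real pointwise bound
  have key : ∀ y ∈ ball x r, y ≠ z →
      Real.exp (β * Real.log (‖x - z‖ / ‖y - z‖)) ≤
        (2:ℝ)^β + Set.indicator (ball z r) (fun y => (2:ℝ)^β * (r / ‖y - z‖)^β) y := by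
    intro y hy hyz
    have hm : 0 < ‖y - z‖ := by rw [norm_pos_iff]; exact sub_ne_zero.mpr hyz
    have hind : 0 ≤ Set.indicator (ball z r) (fun y => (2:ℝ)^β * (r / ‖y - z‖)^β) y :=
      Set.indicator_nonneg (fun y _ => by positivity) y
    rcases eq_or_lt_of_le (norm_nonneg (x - z)) with hd | hd
    · rw [← hd, zero_div, Real.log_zero, mul_zero, Real.exp_zero]
      linarith
    · rw [show β * Real.log (‖x - z‖ / ‖y - z‖) = Real.log (‖x - z‖ / ‖y - z‖) * β by ring,
        ← Real.rpow_def_of_pos (div_pos hd hm)]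
      rcases le_or_gt (‖x - z‖) (2 * ‖y - z‖) with hcase | hcase
      · have h1 : (‖x - z‖ / ‖y - z‖ : ℝ)^β ≤ (2:ℝ)^β := by
          apply Real.rpow_le_rpow (by positivity) _ hβ0.le
          rw [div_le_iff₀ hm]; linarith
        linarith
      · have hdxy : ‖x - y‖ < r := by rw [mem_ball, dist_eq_norm] at hy; rwa [norm_sub_rev]
        have htri : ‖x - z‖ ≤ ‖x - y‖ + ‖y - z‖ := by
          have := dist_triangle x y z
          simpa [dist_eq_norm] using this
        have hd2r : ‖x - z‖ < 2 * r := by linarith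
        have hyz' : y ∈ ball z r := by
          rw [mem_ball, dist_eq_norm]; linarith
        rw [Set.indicator_of_mem hyz']
        have h1 : (‖x - z‖ / ‖y - z‖ : ℝ)^β ≤ (2 * r / ‖y - z‖)^β := by
          apply Real.rpow_le_rpow (by positivity) _ hβ0.le
          gcongr
        have h2 : (2 * r / ‖y - z‖ : ℝ)^β = (2:ℝ)^β * (r / ‖y - z‖)^β := by
          rw [mul_div_assoc, Real.mul_rpow (by norm_num) (by positivity)]
        nlinarith [Real.rpow_nonneg (show (0:ℝ) ≤ 2 * r / ‖y - z‖ by positivity) β]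
    -- end key
  have h_ae : ∀ᵐ y ∂(volume.restrict (ball x r)),
      ENNReal.ofReal (Real.exp (β * Real.log (‖x - z‖ / ‖y - z‖))) ≤
        ENNReal.ofReal ((2:ℝ)^β) +
          Set.indicator (ball z r) (fun y => ENNReal.ofReal ((2:ℝ)^β * (r / ‖y - z‖)^β)) y := by
    have h1 : ∀ᵐ y ∂(volume.restrict (ball x r)), y ≠ z := by
      apply ae_restrict_of_ae
      rw [ae_iff]
      simpa using measure_singleton z
    filter_upwards [h1, ae_restrict_mem measurableSet_ball] with y hyz hy
    have := key y hy hyz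
    calc ENNReal.ofReal (Real.exp (β * Real.log (‖x - z‖ / ‖y - z‖)))
        ≤ ENNReal.ofReal ((2:ℝ)^β + Set.indicator (ball z r)
            (fun y => (2:ℝ)^β * (r / ‖y - z‖)^β) y) := ENNReal.ofReal_le_ofReal this
      _ ≤ _ := by
          rw [ENNReal.ofReal_add (by positivity)
            (Set.indicator_nonneg (fun y _ => by positivity) y)]
          gcongr
          by_cases hmem : y ∈ ball z r
          · rw [Set.indicator_of_mem hmem, Set.indicator_of_mem hmem]
          · rw [Set.indicator_of_notMem hmem, Set.indicator_of_notMem hmem]; simp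
  calc ∫⁻ y in ball x r, ENNReal.ofReal (Real.exp (β * Real.log (‖x - z‖ / ‖y - z‖)))
      ≤ ∫⁻ y in ball x r, (ENNReal.ofReal ((2:ℝ)^β) +
          Set.indicator (ball z r) (fun y => ENNReal.ofReal ((2:ℝ)^β * (r / ‖y - z‖)^β)) y) :=
        lintegral_mono_ae h_ae
    _ = ENNReal.ofReal ((2:ℝ)^β) * volume (ball x r) +
        ∫⁻ y in ball x r, Set.indicator (ball z r)
          (fun y => ENNReal.ofReal ((2:ℝ)^β * (r / ‖y - z‖)^β)) y := by
        rw [lintegral_add_left measurable_const, setLIntegral_const]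
    _ ≤ ENNReal.ofReal ((2:ℝ)^β) * volume (ball x r) +
        ENNReal.ofReal ((2:ℝ)^β * S) * volume (ball x r) := by
        gcongr
        have hswap : ∫⁻ y in ball x r, Set.indicator (ball z r)
            (fun y => ENNReal.ofReal ((2:ℝ)^β * (r / ‖y - z‖)^β)) y ≤
            ∫⁻ y in ball z r, ENNReal.ofReal ((2:ℝ)^β * (r / ‖y - z‖)^β) := by
          rw [lintegral_indicator measurableSet_ball, Measure.restrict_restrict measurableSet_ball]
          exact lintegral_mono_set Set.inter_subset_left
        refine hswap.trans ?_
        have : ∀ y : EuclideanSpace ℝ (Fin n), ENNReal.ofReal ((2:ℝ)^β * (r / ‖y - z‖)^β) =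
            ENNReal.ofReal ((2:ℝ)^β) * ENNReal.ofReal ((r / ‖y - z‖)^β) := fun y =>
          ENNReal.ofReal_mul (by positivity)
        simp_rw [this]
        rw [lintegral_const_mul' _ _ ENNReal.ofReal_ne_top]
        have hball := ball_singular n hn hβ0 hβn z r hr
        have hvol : volume (ball z r) = volume (ball x r) := by
          rw [Measure.addHaar_ball volume z hr.le, Measure.addHaar_ball volume x hr.le]
        calc ENNReal.ofReal ((2:ℝ)^β) * ∫⁻ y in ball z r, ENNReal.ofReal ((r / ‖y - z‖)^β)
            ≤ ENNReal.ofReal ((2:ℝ)^β) * (ENNReal.ofReal S * volume (ball z r)) := by gcongr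
          _ = ENNReal.ofReal ((2:ℝ)^β * S) * volume (ball x r) := by
              rw [hvol, ← mul_assoc, ← ENNReal.ofReal_mul (by positivity)]
    _ = ENNReal.ofReal ((2:ℝ)^β + (2:ℝ)^β * S) * volume (ball x r) := by
        rw [ENNReal.ofReal_add (by positivity) (by positivity), add_mul]

/-- Suppose `Q ≥ 0` is continuous on `ℝⁿ` with `μ = (1/c_n) Q e^{nw} dx` of finite
total mass `α < 1`, where `w(x) = (1/c_n) ∫ log(|z|/|x−z|) Q(z) e^{nw(z)} dz + C₀`.
Then `e^{nw}` is an `A₁` weight: `M(e^{nw})(x) ≤ C' e^{nw(x)}` with `C'` depending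
only on `n` (together with the dimensional constant `c_n`) and `α`. -/
theorem stmt10 (n : ℕ) (hn : 1 ≤ n) (c : ℝ) (hc : 0 < c) (α : ℝ) (hα : α < 1) :
    ∃ C' : ℝ, 0 < C' ∧
      ∀ (Q w : EuclideanSpace ℝ (Fin n) → ℝ) (C₀ : ℝ),
        Continuous Q → (∀ z, 0 ≤ Q z) → Continuous w →
        Integrable (fun z => Q z * Real.exp ((n : ℝ) * w z)) →
        (∀ x, Integrable (fun z =>
            Real.log (‖z‖ / ‖x - z‖) * (Q z * Real.exp ((n : ℝ) * w z)))) →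
        (∀ x, w x = (1 / c) *
            (∫ z, Real.log (‖z‖ / ‖x - z‖) * (Q z * Real.exp ((n : ℝ) * w z))) + C₀) →
        (1 / c) * (∫ z, Q z * Real.exp ((n : ℝ) * w z)) = α →
        ∀ (x : EuclideanSpace ℝ (Fin n)) (r : ℝ), 0 < r →
          ∫⁻ y in Metric.ball x r, ENNReal.ofReal (Real.exp ((n : ℝ) * w y)) ≤
            ENNReal.ofReal (C' * Real.exp ((n : ℝ) * w x)) *
              volume (Metric.ball x r) := by
  haveI : Nonempty (Fin n) := ⟨⟨0, hn⟩⟩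
  haveI : Nontrivial (EuclideanSpace ℝ (Fin n)) := by
    have : Nontrivial (Fin n → ℝ) := inferInstance
    exact (EuclideanSpace.equiv (Fin n) ℝ).toEquiv.nontrivial
  rcases le_or_gt α 0 with hα0 | hα0
  · -- degenerate case : the measure is zero and w is constant
    refine ⟨1, one_pos, ?_⟩
    intro Q w C₀ hQc hQ0 hwc hfint hlogint hw hmass x r hr
    have hf0 : ∀ z, 0 ≤ Q z * Real.exp ((n : ℝ) * w z) := fun z =>
      mul_nonneg (hQ0 z) (Real.exp_pos _).le
    have hI0 : ∫ z, Q z * Real.exp ((n : ℝ) * w z) = 0 := by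
      have h1 : 0 ≤ ∫ z, Q z * Real.exp ((n : ℝ) * w z) :=
        integral_nonneg hf0
      have h2 : 0 < 1/c := by positivity
      nlinarith
    have hfz : (fun z => Q z * Real.exp ((n : ℝ) * w z)) =ᵐ[volume] 0 :=
      (integral_eq_zero_iff_of_nonneg hf0 hfint).mp hI0
    have hwconst : ∀ y, w y = C₀ := by
      intro y
      rw [hw y]
      have h3 : (fun z => Real.log (‖z‖ / ‖y - z‖) * (Q z * Real.exp ((n : ℝ) * w z)))
          =ᵐ[volume] 0 := by
        filter_upwards [hfz] with z hz
        simp only [Pi.zero_apply] at hz ⊢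
        rw [hz, mul_zero]
      rw [integral_congr_ae h3]
      simp
    have : ∀ y, (ENNReal.ofReal (Real.exp ((n : ℝ) * w y)))
        = ENNReal.ofReal (Real.exp ((n : ℝ) * C₀)) := by intro y; rw [hwconst y]
    simp_rw [this, setLIntegral_const, hwconst x, one_mul]
    exact le_rfl
  · -- main case : 0 < α < 1
    set β : ℝ := n * α with hβ
    have hn0 : (0:ℝ) < n := by exact_mod_cast hn
    have hβ0 : 0 < β := by positivity
    have hβn : β < n := by nlinarith
    set K : ℝ := (2:ℝ)^β + (2:ℝ)^β * ((2:ℝ)^β * (1 - (2:ℝ)^β / 2^n)⁻¹) with hK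
    have hq1 : (2:ℝ)^β / 2^n < 1 := by
      rw [div_lt_one (by positivity)]
      calc (2:ℝ)^β < 2^(n:ℝ) := (Real.rpow_lt_rpow_left_iff one_lt_two).mpr hβn
        _ = 2^n := by rw [Real.rpow_natCast]
    have hK0 : 0 < K := by
      have h1 : (0:ℝ) < (2:ℝ)^β := by positivity
      have h2 : (0:ℝ) ≤ (1 - (2:ℝ)^β / 2^n)⁻¹ := by rw [inv_nonneg]; linarith
      have h3 : (0:ℝ) ≤ (2:ℝ)^β * ((2:ℝ)^β * (1 - (2:ℝ)^β / 2^n)⁻¹) :=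
        mul_nonneg h1.le (mul_nonneg h1.le h2)
      rw [hK]
      linarith
    refine ⟨K, hK0, ?_⟩
    intro Q w C₀ hQc hQ0 hwc hfint hlogint hw hmass x r hr
    set f : EuclideanSpace ℝ (Fin n) → ℝ := fun z => Q z * Real.exp ((n : ℝ) * w z) with hf
    have hf0 : ∀ z, 0 ≤ f z := fun z => mul_nonneg (hQ0 z) (Real.exp_pos _).le
    have hfc : Continuous f := hQc.mul (Real.continuous_exp.comp (continuous_const.mul hwc))
    have hT : ∫ z, f z = c * α := by
      field_simp at hmass
      linarith
    have hT0 : 0 < c * α := by positivity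
    set fnn : EuclideanSpace ℝ (Fin n) → ℝ≥0 := fun z => Real.toNNReal (f z) with hfnn
    have hfnnmeas : Measurable fnn := hfc.measurable.real_toNNReal
    have hcoe : ∀ z, ((fnn z : ℝ)) = f z := fun z => Real.coe_toNNReal _ (hf0 z)
    set μ' : Measure (EuclideanSpace ℝ (Fin n)) :=
      volume.withDensity (fun z => (fnn z : ℝ≥0∞)) with hμ'
    have hμ'univ : μ' Set.univ = ENNReal.ofReal (c * α) := by
      rw [hμ', withDensity_apply _ MeasurableSet.univ, Measure.restrict_univ, ← hT,
        ofReal_integral_eq_lintegral_ofReal hfint (Filter.Eventually.of_forall hf0)]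
      rfl
    have hcα_ne : ENNReal.ofReal (c * α) ≠ 0 := (ENNReal.ofReal_pos.mpr hT0).ne'
    set P : Measure (EuclideanSpace ℝ (Fin n)) := (ENNReal.ofReal (c * α))⁻¹ • μ' with hP
    haveI hPprob : IsProbabilityMeasure P := by
      constructor
      rw [hP, Measure.smul_apply, hμ'univ, smul_eq_mul,
        ENNReal.inv_mul_cancel hcα_ne ENNReal.ofReal_ne_top]
    have hkey : ∀ y : EuclideanSpace ℝ (Fin n),
        Integrable (fun z => Real.log (‖x - z‖ / ‖y - z‖)) P ∧
        (n : ℝ) * w y - (n : ℝ) * w x =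
          (n : ℝ) * α * ∫ z, Real.log (‖x - z‖ / ‖y - z‖) ∂P := by
      intro y
      have hae : ∀ᵐ z ∂(volume : Measure (EuclideanSpace ℝ (Fin n))),
          Real.log (‖z‖ / ‖y - z‖) * f z - Real.log (‖z‖ / ‖x - z‖) * f z
            = Real.log (‖x - z‖ / ‖y - z‖) * f z := by
        have h0 : ∀ᵐ z ∂(volume : Measure (EuclideanSpace ℝ (Fin n))), z ≠ 0 := by
          rw [ae_iff]; simpa using measure_singleton (0 : EuclideanSpace ℝ (Fin n))
        have hx' : ∀ᵐ z ∂(volume : Measure (EuclideanSpace ℝ (Fin n))), z ≠ x := by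
          rw [ae_iff]; simpa using measure_singleton x
        have hy' : ∀ᵐ z ∂(volume : Measure (EuclideanSpace ℝ (Fin n))), z ≠ y := by
          rw [ae_iff]; simpa using measure_singleton y
        filter_upwards [h0, hx', hy'] with z hz0 hzx hzy
        have h1 : ‖z‖ ≠ 0 := norm_ne_zero_iff.mpr hz0
        have h2 : ‖x - z‖ ≠ 0 := norm_ne_zero_iff.mpr (sub_ne_zero.mpr (Ne.symm hzx))
        have h3 : ‖y - z‖ ≠ 0 := norm_ne_zero_iff.mpr (sub_ne_zero.mpr (Ne.symm hzy))
        rw [Real.log_div h1 h3, Real.log_div h1 h2, Real.log_div h2 h3]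
        ring
      have hint2 : Integrable (fun z => Real.log (‖x - z‖ / ‖y - z‖) * f z) volume :=
        ((hlogint y).sub (hlogint x)).congr hae
      have hint3 : Integrable (fun z => Real.log (‖x - z‖ / ‖y - z‖)) μ' := by
        rw [hμ', integrable_withDensity_iff_integrable_smul hfnnmeas]
        have heq : (fun z => fnn z • Real.log (‖x - z‖ / ‖y - z‖)) =
            fun z => Real.log (‖x - z‖ / ‖y - z‖) * f z := by
          funext z
          rw [NNReal.smul_def, smul_eq_mul, hcoe z, mul_comm]
        rw [heq]
        exact hint2
      have hintP : Integrable (fun z => Real.log (‖x - z‖ / ‖y - z‖)) P :=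
        hint3.smul_measure (ENNReal.inv_ne_top.mpr hcα_ne)
      have hPint : ∫ z, Real.log (‖x - z‖ / ‖y - z‖) ∂P
          = (c * α)⁻¹ * ∫ z, Real.log (‖x - z‖ / ‖y - z‖) * f z := by
        rw [hP, integral_smul_measure, hμ',
          integral_withDensity_eq_integral_smul hfnnmeas]
        have heq : (fun z => fnn z • Real.log (‖x - z‖ / ‖y - z‖)) =
            fun z => Real.log (‖x - z‖ / ‖y - z‖) * f z := by
          funext z
          rw [NNReal.smul_def, smul_eq_mul, hcoe z, mul_comm]
        rw [heq, ENNReal.toReal_inv, ENNReal.toReal_ofReal hT0.le, smul_eq_mul]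
      have hAB : (∫ z, Real.log (‖z‖ / ‖y - z‖) * f z) -
          (∫ z, Real.log (‖z‖ / ‖x - z‖) * f z) =
          ∫ z, Real.log (‖x - z‖ / ‖y - z‖) * f z := by
        rw [← integral_sub (hlogint y) (hlogint x)]
        exact integral_congr_ae hae
      have hwdiff : w y - w x = (1/c) * ∫ z, Real.log (‖x - z‖ / ‖y - z‖) * f z := by
        rw [hw y, hw x, ← hAB]
        ring
      refine ⟨hintP, ?_⟩
      rw [hPint]
      have hαne : α ≠ 0 := hα0.ne'
      calc (n : ℝ) * w y - (n : ℝ) * w x = (n : ℝ) * (w y - w x) := by ring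
        _ = (n : ℝ) * ((1/c) * ∫ z, Real.log (‖x - z‖ / ‖y - z‖) * f z) := by rw [hwdiff]
        _ = (n : ℝ) * α * ((c * α)⁻¹ * ∫ z, Real.log (‖x - z‖ / ‖y - z‖) * f z) := by
            field_simp
    -- measurability of the kernel
    have hmeas : Measurable (fun p : EuclideanSpace ℝ (Fin n) × EuclideanSpace ℝ (Fin n) =>
        ENNReal.ofReal (Real.exp (β * Real.log (‖x - p.2‖ / ‖p.1 - p.2‖)))) := by
      apply Measurable.ennreal_ofReal
      apply Real.measurable_exp.comp
      apply Measurable.const_mul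
      apply Real.measurable_log.comp
      exact ((continuous_const.sub continuous_snd).norm.measurable).div
        ((continuous_fst.sub continuous_snd).norm.measurable)
    -- pointwise Jensen bound
    have hjensen : ∀ y : EuclideanSpace ℝ (Fin n),
        ENNReal.ofReal (Real.exp ((n : ℝ) * w y - (n : ℝ) * w x)) ≤
          ∫⁻ z, ENNReal.ofReal (Real.exp (β * Real.log (‖x - z‖ / ‖y - z‖))) ∂P := by
      intro y
      obtain ⟨hintP, hval⟩ := hkey y
      have hint4 : Integrable (fun z => β * Real.log (‖x - z‖ / ‖y - z‖)) P :=
        hintP.const_mul _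
      have h5 : (n : ℝ) * w y - (n : ℝ) * w x =
          ∫ z, β * Real.log (‖x - z‖ / ‖y - z‖) ∂P := by
        rw [MeasureTheory.integral_const_mul, hval, hβ]
      rw [h5]
      exact jensen_exp P hint4
    -- main chain
    have hwx : ∀ y : EuclideanSpace ℝ (Fin n),
        ENNReal.ofReal (Real.exp ((n : ℝ) * w y)) =
          ENNReal.ofReal (Real.exp ((n : ℝ) * w x)) *
            ENNReal.ofReal (Real.exp ((n : ℝ) * w y - (n : ℝ) * w x)) := by
      intro y
      rw [← ENNReal.ofReal_mul (Real.exp_pos _).le, ← Real.exp_add]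
      congr 2
      ring
    calc ∫⁻ y in ball x r, ENNReal.ofReal (Real.exp ((n : ℝ) * w y))
        = ∫⁻ y in ball x r, ENNReal.ofReal (Real.exp ((n : ℝ) * w x)) *
            ENNReal.ofReal (Real.exp ((n : ℝ) * w y - (n : ℝ) * w x)) :=
          lintegral_congr fun y => hwx y
      _ = ENNReal.ofReal (Real.exp ((n : ℝ) * w x)) *
            ∫⁻ y in ball x r, ENNReal.ofReal (Real.exp ((n : ℝ) * w y - (n : ℝ) * w x)) :=
          lintegral_const_mul' _ _ ENNReal.ofReal_ne_top
      _ ≤ ENNReal.ofReal (Real.exp ((n : ℝ) * w x)) *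
            ∫⁻ y in ball x r, ∫⁻ z, ENNReal.ofReal
              (Real.exp (β * Real.log (‖x - z‖ / ‖y - z‖))) ∂P := by
          gcongr with y
          exact hjensen y
      _ = ENNReal.ofReal (Real.exp ((n : ℝ) * w x)) *
            ∫⁻ z, (∫⁻ y in ball x r, ENNReal.ofReal
              (Real.exp (β * Real.log (‖x - z‖ / ‖y - z‖)))) ∂P := by
          rw [lintegral_lintegral_swap hmeas.aemeasurable]
      _ ≤ ENNReal.ofReal (Real.exp ((n : ℝ) * w x)) *
            ∫⁻ _, ENNReal.ofReal K * volume (ball x r) ∂P := by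
          gcongr with z
          exact ball_kernel n hn hβ0 hβn x z r hr
      _ = ENNReal.ofReal (Real.exp ((n : ℝ) * w x)) * (ENNReal.ofReal K * volume (ball x r)) := by
          rw [lintegral_const, measure_univ, mul_one]
      _ = ENNReal.ofReal (K * Real.exp ((n : ℝ) * w x)) * volume (ball x r) := by
          rw [← mul_assoc, ← ENNReal.ofReal_mul (Real.exp_pos _).le, mul_comm (Real.exp _) K]
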